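/- Let u > −1 and z ∈ [0,1) be real numbers with z(1+u) < 1. Then the function v ↦ F(z,u,v) is differentiable at v = 1, and its derivative there equals E(z,u) := 2u(1+u)/(1−z(1+u))²·log(1/(1−z)) − 2u/((1−z)²(1+u)²)·log(1/(1−z(1+u))) + zu·(1 − 2z − 3u + z² + uz − 2u² + 2uz² + 3u²z + u²z²)/((1−z)²(1+u)(1−z(1+u))²). -/

import Mathlib

/-- `Ω = √(1 − 4(1+u)v(1−v))`. -/
noncomputable def OmegaR (u v : ℝ) : ℝ := Real.sqrt (1 - 4 * (1 + u) * v * (1 - v))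

/-- The denominator of `Φ(z,u,v)`:
`(Ω + 1 − 2v(1+u) + (1−z)^Ω·(Ω − 1 + 2v(1+u)))·(1−z)`, with `(1−z)^Ω = exp(Ω·log(1−z))`. -/
noncomputable def denPhi (z u v : ℝ) : ℝ :=
  (OmegaR u v + 1 - 2 * v * (1 + u)
    + Real.exp (OmegaR u v * Real.log (1 - z)) * (OmegaR u v - 1 + 2 * v * (1 + u)))
    * (1 - z)

/-- The explicit solution (4):
`Φ(z,u,v) = (Ω + 1 − 2v + (1−z)^Ω·(Ω − 1 + 2v)) / ((Ω + 1 − 2v(1+u) + (1−z)^Ω·(Ω − 1 + 2v(1+u)))·(1−z))`. -/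
noncomputable def PhiR (z u v : ℝ) : ℝ :=
  (OmegaR u v + 1 - 2 * v
    + Real.exp (OmegaR u v * Real.log (1 - z)) * (OmegaR u v - 1 + 2 * v))
    / denPhi z u v

/-- The function (6):
`F(z,u,v) = (1 + 2z(v−1))/(1−z)² + (1−z)^{−2}·∫₀^z (∂Φ/∂t − (2v/(1−t))·Φ)·(1−t)² dt`. -/
noncomputable def FR (z u v : ℝ) : ℝ :=
  (1 + 2 * z * (v - 1)) / (1 - z) ^ 2
    + ((1 - z) ^ 2)⁻¹ * ∫ t in (0 : ℝ)..z,
        (deriv (fun s => PhiR s u v) t - 2 * v / (1 - t) * PhiR t u v) * (1 - t) ^ 2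

noncomputable def auxE (u v t : ℝ) : ℝ := Real.exp (OmegaR u v * Real.log (1 - t))

noncomputable def phiDt (u v t : ℝ) : ℝ :=
  (auxE u v t * (OmegaR u v * ((1 - t)⁻¹ * -1)) * (OmegaR u v - 1 + 2 * v) * denPhi t u v
    - (OmegaR u v + 1 - 2 * v + auxE u v t * (OmegaR u v - 1 + 2 * v)) *
      (auxE u v t * (OmegaR u v * ((1 - t)⁻¹ * -1)) * (OmegaR u v - 1 + 2 * v * (1 + u)) * (1 - t)
        + (OmegaR u v + 1 - 2 * v * (1 + u) + auxE u v t * (OmegaR u v - 1 + 2 * v * (1 + u))) * -1))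
    / denPhi t u v ^ 2

lemma hasDerivAt_phiR_t (u v t : ℝ) (ht : t < 1) (hden : denPhi t u v ≠ 0) :
    HasDerivAt (fun s => PhiR s u v) (phiDt u v t) t := by
  have h1t : (1 : ℝ) - t ≠ 0 := by intro h; linarith [h]
  have h1 : HasDerivAt (fun s : ℝ => 1 - s) (-1) t := by
    simpa using (hasDerivAt_id t).const_sub 1
  have hlog : HasDerivAt (fun s : ℝ => Real.log (1 - s)) ((1 - t)⁻¹ * -1) t :=
    (Real.hasDerivAt_log h1t).comp t h1
  have hE : HasDerivAt (fun s : ℝ => Real.exp (OmegaR u v * Real.log (1 - s)))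
      (Real.exp (OmegaR u v * Real.log (1 - t)) * (OmegaR u v * ((1 - t)⁻¹ * -1))) t :=
    (hlog.const_mul (OmegaR u v)).exp
  have hN := (hE.mul_const (OmegaR u v - 1 + 2 * v)).const_add (OmegaR u v + 1 - 2 * v)
  have hDin := (hE.mul_const (OmegaR u v - 1 + 2 * v * (1 + u))).const_add
    (OmegaR u v + 1 - 2 * v * (1 + u))
  have hD := hDin.mul h1
  have hΦ := hN.div hD (by simpa [denPhi] using hden)
  exact hΦ

lemma continuousAt_phiDt (u v t : ℝ) (ht : t < 1) (hden : denPhi t u v ≠ 0) :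
    ContinuousAt (fun s => phiDt u v s) t := by
  have h1t : (1 : ℝ) - t ≠ 0 := by intro h; linarith [h]
  have hden' : ((OmegaR u v + 1 - 2 * v * (1 + u)
      + Real.exp (OmegaR u v * Real.log (1 - t)) * (OmegaR u v - 1 + 2 * v * (1 + u)))
      * (1 - t)) ≠ 0 := by simp only [denPhi] at hden; exact hden
  have hden2 : (((OmegaR u v + 1 - 2 * v * (1 + u)
      + Real.exp (OmegaR u v * Real.log (1 - t)) * (OmegaR u v - 1 + 2 * v * (1 + u)))
      * (1 - t)) ^ 2) ≠ 0 := pow_ne_zero 2 hden'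
  simp only [phiDt, auxE, denPhi]
  fun_prop (disch := assumption)

set_option maxHeartbeats 1000000 in
open Filter MeasureTheory Topology in
/-- The derivative of `v ↦ F(z,u,v)` at `v = 1` equals the function `E(z,u)` of
formula (8). -/
theorem deriv_F_at_one (u z : ℝ) (hu : -1 < u) (hz : z ∈ Set.Ico (0 : ℝ) 1)
    (hzu : z * (1 + u) < 1) :
    HasDerivAt (fun v => FR z u v)
      (2 * u * (1 + u) / (1 - z * (1 + u)) ^ 2 * Real.log (1 / (1 - z))
        - 2 * u / ((1 - z) ^ 2 * (1 + u) ^ 2) * Real.log (1 / (1 - z * (1 + u)))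
        + z * u * (1 - 2 * z - 3 * u + z ^ 2 + u * z - 2 * u ^ 2 + 2 * u * z ^ 2
            + 3 * u ^ 2 * z + u ^ 2 * z ^ 2)
          / ((1 - z) ^ 2 * (1 + u) * (1 - z * (1 + u)) ^ 2)) 1 := by
  obtain ⟨hz0, hz1⟩ := hz
  have ha0 : (0:ℝ) < 1 + u := by linarith
  have h1z : (0:ℝ) < 1 - z := by linarith
  have h1zne : (1:ℝ) - z ≠ 0 := ne_of_gt h1z
  have hzinv : z < (1+u)⁻¹ := by
    rw [← one_div]
    exact (lt_div_iff₀ ha0).mpr (by linarith)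
  have hminz : z < min 1 (1+u)⁻¹ := lt_min hz1 hzinv
  set z' : ℝ := (z + min 1 (1+u)⁻¹) / 2 with hz'def
  have hzz' : z < z' := by simp only [hz'def]; linarith
  have hz'lt : z' < min 1 (1+u)⁻¹ := by simp only [hz'def]; linarith
  have hz'1 : z' < 1 := lt_of_lt_of_le hz'lt (min_le_left _ _)
  have hz'inv : z' < (1+u)⁻¹ := lt_of_lt_of_le hz'lt (min_le_right _ _)
  have haz' : z' * (1+u) < 1 := by
    have h := mul_lt_mul_of_pos_right hz'inv ha0
    rwa [inv_mul_cancel₀ (ne_of_gt ha0)] at h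
  have hm : (0:ℝ) < 1 - z' * (1+u) := by linarith
  have hw1 : OmegaR u 1 = 1 := by norm_num [OmegaR]
  -- eventual conditions near v = 1
  have hwc : ContinuousAt (fun v : ℝ => OmegaR u v) 1 := by simp only [OmegaR]; fun_prop
  have e1 : ∀ᶠ v in 𝓝 (1:ℝ), OmegaR u v ∈ Set.Ioo (1/2 : ℝ) 2 :=
    hwc.eventually_mem (Ioo_mem_nhds (by rw [hw1]; norm_num) (by rw [hw1]; norm_num))
  have e2 : ∀ᶠ v in 𝓝 (1:ℝ), v ∈ Set.Ioo (0:ℝ) 2 :=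
    isOpen_Ioo.eventually_mem (show (1:ℝ) ∈ Set.Ioo (0:ℝ) 2 by norm_num)
  have e3 : ∀ᶠ v in 𝓝 (1:ℝ), 0 < OmegaR u v - 1 + 2*v*(1+u) := by
    have hc : ContinuousAt (fun v : ℝ => OmegaR u v - 1 + 2*v*(1+u)) 1 := by
      simp only [OmegaR]; fun_prop
    have h := hc.eventually_mem (Ioi_mem_nhds
      (show (0:ℝ) < OmegaR u 1 - 1 + 2*1*(1+u) by rw [hw1]; linarith))
    exact h.mono (fun v hv => hv)
  have e4 : ∀ᶠ v in 𝓝 (1:ℝ), 1 - z'*(1+u) < OmegaR u v + 1 - 2*v*(1+u)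
      + Real.exp (OmegaR u v * Real.log (1 - z')) * (OmegaR u v - 1 + 2*v*(1+u)) := by
    have hc : ContinuousAt (fun v : ℝ => OmegaR u v + 1 - 2*v*(1+u)
        + Real.exp (OmegaR u v * Real.log (1 - z')) * (OmegaR u v - 1 + 2*v*(1+u))) 1 := by
      simp only [OmegaR]; fun_prop
    have hval : OmegaR u 1 + 1 - 2*1*(1+u)
        + Real.exp (OmegaR u 1 * Real.log (1 - z')) * (OmegaR u 1 - 1 + 2*1*(1+u))
        = 2 * (1 - z'*(1+u)) := by
      rw [hw1, one_mul, Real.exp_log (by linarith : (0:ℝ) < 1 - z')]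
      ring
    have h := hc.eventually_mem (Ioi_mem_nhds
      (show 1 - z'*(1+u) < OmegaR u 1 + 1 - 2*1*(1+u)
        + Real.exp (OmegaR u 1 * Real.log (1 - z')) * (OmegaR u 1 - 1 + 2*1*(1+u)) by
          rw [hval]; linarith))
    exact h.mono (fun v hv => hv)
  obtain ⟨δ, hδpos, hδ⟩ := Metric.eventually_nhds_iff.mp ((e1.and e2).and (e3.and e4))
  -- uniform positivity of the denominator factor
  have hDtil : ∀ v, dist v 1 < δ → ∀ t : ℝ, t ≤ z' →
      1 - z'*(1+u) < OmegaR u v + 1 - 2*v*(1+u)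
        + Real.exp (OmegaR u v * Real.log (1 - t)) * (OmegaR u v - 1 + 2*v*(1+u)) := by
    intro v hv t ht
    obtain ⟨⟨hw, _⟩, hc, hDz'⟩ := hδ hv
    simp only [Set.mem_Ioo] at hw
    have h1t : (0:ℝ) < 1 - t := by linarith
    have hlle : Real.log (1 - z') ≤ Real.log (1 - t) :=
      Real.log_le_log (by linarith) (by linarith)
    have hexp : Real.exp (OmegaR u v * Real.log (1 - z'))
        ≤ Real.exp (OmegaR u v * Real.log (1 - t)) :=
      Real.exp_le_exp.mpr (mul_le_mul_of_nonneg_left hlle (by linarith [hw.1]))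
    have h2 := mul_le_mul_of_nonneg_right hexp (le_of_lt hc)
    linarith
  have hdenne : ∀ v, dist v 1 < δ → ∀ t : ℝ, t ≤ z' → denPhi t u v ≠ 0 := by
    intro v hv t ht
    have h1t : (0:ℝ) < 1 - t := by linarith
    have h := hDtil v hv t ht
    simp only [denPhi]
    exact ne_of_gt (mul_pos (by linarith) h1t)
  -- the value of things at v = 1
  have hta : ∀ t : ℝ, 0 ≤ t → t ≤ z → 0 < 1 - t*(1+u) := by
    intro t ht0 htz
    nlinarith
  have hden1 : ∀ t : ℝ, 0 ≤ t → t ≤ z → denPhi t u 1 = 2 * (1 - t*(1+u)) * (1-t) := by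
    intro t ht0 htz
    have h1t : (0:ℝ) < 1 - t := by linarith
    simp only [denPhi]
    rw [hw1, one_mul, Real.exp_log h1t]
    ring
  have hPhi1 : ∀ t : ℝ, 0 ≤ t → t ≤ z → PhiR t u 1 = (1 - t*(1+u))⁻¹ := by
    intro t ht0 htz
    have h1t : (0:ℝ) < 1 - t := by linarith
    have h2 := hta t ht0 htz
    simp only [PhiR]
    rw [hden1 t ht0 htz, hw1, one_mul, Real.exp_log h1t]
    field_simp
    ring
  have hJ1 : (∫ t in (0:ℝ)..z, (1-t) * PhiR t u 1)
      = z/(1+u) - u/(1+u)^2 * Real.log (1 - z*(1+u)) := by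
    rw [show (∫ t in (0:ℝ)..z, (1-t) * PhiR t u 1)
        = ∫ t in (0:ℝ)..z, (1-t) * (1 - t*(1+u))⁻¹ from
      intervalIntegral.integral_congr (fun t ht => by
        rw [Set.uIcc_of_le hz0] at ht
        rw [hPhi1 t ht.1 ht.2])]
    have hA : ∀ t ∈ Set.uIcc (0:ℝ) z,
        HasDerivAt (fun s => s/(1+u) - u/(1+u)^2 * Real.log (1 - s*(1+u)))
          ((1-t) * (1 - t*(1+u))⁻¹) t := by
      intro t ht
      rw [Set.uIcc_of_le hz0] at ht
      have h2 := hta t ht.1 ht.2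
      have hin : HasDerivAt (fun s : ℝ => 1 - s*(1+u)) (-(1*(1+u))) t := by
        simpa using ((hasDerivAt_id t).mul_const (1+u)).const_sub 1
      have hlog := (Real.hasDerivAt_log (ne_of_gt h2)).comp t hin
      have h := ((hasDerivAt_id t).div_const (1+u)).sub (hlog.const_mul (u/(1+u)^2))
      refine h.congr_deriv ?_
      have h2' : 1 - t*(1+u) ≠ 0 := ne_of_gt h2
      have hX : 1 - (1+u)*t ≠ 0 := by rw [mul_comm]; exact h2'
      field_simp
      ring
    have hIIA : IntervalIntegrable (fun t => (1-t) * (1 - t*(1+u))⁻¹) volume 0 z := by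
      apply ContinuousOn.intervalIntegrable
      intro t ht
      rw [Set.uIcc_of_le hz0] at ht
      have h2 := hta t ht.1 ht.2
      exact ((continuousAt_const.sub continuousAt_id).mul
        ((continuousAt_const.sub (continuousAt_id.mul continuousAt_const)).inv₀
          (ne_of_gt h2))).continuousWithinAt
    rw [intervalIntegral.integral_eq_sub_of_hasDerivAt hA hIIA]
    norm_num
  -- identity for FR near 1
  have hFReq : ∀ v, dist v 1 < δ →
      FR z u v = PhiR z u v
        + (v - 1) * (2/(1-z)^2 * (z - ∫ t in (0:ℝ)..z, (1-t) * PhiR t u v)) := by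
    intro v hv
    obtain ⟨⟨hw, hvv⟩, hc, hDz'⟩ := hδ hv
    simp only [Set.mem_Ioo] at hw hvv
    have hden : ∀ t : ℝ, t ≤ z' → denPhi t u v ≠ 0 := hdenne v hv
    have hder : ∀ t : ℝ, t ≤ z' → HasDerivAt (fun s => PhiR s u v) (phiDt u v t) t :=
      fun t ht => hasDerivAt_phiR_t u v t (by linarith) (hden t ht)
    have hgder : ∀ t ∈ Set.uIcc (0:ℝ) z, HasDerivAt (fun s => PhiR s u v * (1-s)^2)
        (phiDt u v t * (1-t)^2 + PhiR t u v * (2*(1-t)*(-1))) t := by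
      intro t ht
      rw [Set.uIcc_of_le hz0] at ht
      have h1 : HasDerivAt (fun s : ℝ => 1 - s) (-1) t := by
        simpa using (hasDerivAt_id t).const_sub 1
      have h := (hder t (by linarith [ht.2])).mul (h1.pow 2)
      refine h.congr_deriv ?_
      simp only [Pi.pow_apply]
      push_cast
      ring
    have hcontPhi : ∀ t : ℝ, t ≤ z' → ContinuousAt (fun s => PhiR s u v) t :=
      fun t ht => (hder t ht).continuousAt
    have hII1 : IntervalIntegrable
        (fun t => phiDt u v t * (1-t)^2 + PhiR t u v * (2*(1-t)*(-1))) volume 0 z := by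
      apply ContinuousOn.intervalIntegrable
      intro t ht
      rw [Set.uIcc_of_le hz0] at ht
      have htz' : t ≤ z' := by linarith [ht.2]
      exact (((continuousAt_phiDt u v t (by linarith) (hden t htz')).mul
        (by fun_prop : ContinuousAt (fun t : ℝ => (1-t)^2) t)).add
        ((hcontPhi t htz').mul
          (by fun_prop : ContinuousAt (fun t : ℝ => 2*(1-t)*(-1)) t))).continuousWithinAt
    have hII2 : IntervalIntegrable (fun t => (1-t) * PhiR t u v) volume 0 z := by
      apply ContinuousOn.intervalIntegrable
      intro t ht
      rw [Set.uIcc_of_le hz0] at ht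
      exact ((continuousAt_const.sub continuousAt_id).mul
        (hcontPhi t (by linarith [ht.2]))).continuousWithinAt
    have hFTC := intervalIntegral.integral_eq_sub_of_hasDerivAt hgder hII1
    have hphi0 : PhiR 0 u v = 1 := by
      have hx : Real.exp (OmegaR u v * Real.log (1 - 0)) = 1 := by
        norm_num
      have hΩ : (0:ℝ) < OmegaR u v := by linarith [hw.1]
      simp only [PhiR, denPhi]
      rw [hx, div_eq_one_iff_eq (by nlinarith)]
      ring
    have hinteq : (∫ t in (0:ℝ)..z,
          (deriv (fun s => PhiR s u v) t - 2 * v / (1 - t) * PhiR t u v) * (1 - t) ^ 2)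
        = ∫ t in (0:ℝ)..z, ((phiDt u v t * (1-t)^2 + PhiR t u v * (2*(1-t)*(-1)))
            - (2*(v-1)) * ((1-t) * PhiR t u v)) := by
      apply intervalIntegral.integral_congr
      intro t ht
      rw [Set.uIcc_of_le hz0] at ht
      have htz' : t ≤ z' := by linarith [ht.2]
      have h1t : (1:ℝ) - t ≠ 0 := ne_of_gt (by linarith : (0:ℝ) < 1 - t)
      simp only [(hder t htz').deriv]
      field_simp
      ring
    have hsub : (∫ t in (0:ℝ)..z, ((phiDt u v t * (1-t)^2 + PhiR t u v * (2*(1-t)*(-1)))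
          - (2*(v-1)) * ((1-t) * PhiR t u v)))
        = (∫ t in (0:ℝ)..z, (phiDt u v t * (1-t)^2 + PhiR t u v * (2*(1-t)*(-1))))
          - (2*(v-1)) * ∫ t in (0:ℝ)..z, (1-t) * PhiR t u v := by
      rw [intervalIntegral.integral_sub hII1 (hII2.const_mul (2*(v-1))),
        intervalIntegral.integral_const_mul]
    simp only [FR]
    rw [hinteq, hsub, hFTC]
    rw [hphi0]
    field_simp
    ring
  -- continuity of the integral in v at 1
  have hmeasJ : ∀ᶠ v in 𝓝 (1:ℝ), AEStronglyMeasurable (fun t => (1-t) * PhiR t u v)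
      (volume.restrict (Set.uIoc (0:ℝ) z)) := by
    rw [Metric.eventually_nhds_iff]
    refine ⟨δ, hδpos, fun v hv => ?_⟩
    apply ContinuousOn.aestronglyMeasurable ?_ measurableSet_uIoc
    intro t ht
    rw [Set.uIoc_of_le hz0] at ht
    have htz' : t ≤ z' := by linarith [ht.2]
    exact ((continuousAt_const.sub continuousAt_id).mul
      ((hasDerivAt_phiR_t u v t (by linarith) (hdenne v hv t htz')).continuousAt)).continuousWithinAt
  have hbound : ∀ᶠ v in 𝓝 (1:ℝ), ∀ᵐ t ∂volume, t ∈ Set.uIoc (0:ℝ) z →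
      ‖(1-t) * PhiR t u v‖ ≤ 14 / (1 - z'*(1+u)) := by
    rw [Metric.eventually_nhds_iff]
    refine ⟨δ, hδpos, fun v hv => Eventually.of_forall (fun t ht => ?_)⟩
    rw [Set.uIoc_of_le hz0] at ht
    obtain ⟨⟨hw, hvv⟩, hc, _⟩ := hδ hv
    simp only [Set.mem_Ioo] at hw hvv
    have h1t : (0:ℝ) < 1 - t := by linarith [ht.2]
    have htz' : t ≤ z' := by linarith [ht.2]
    have hD := hDtil v hv t htz'
    have hXpos : 0 < Real.exp (OmegaR u v * Real.log (1 - t)) := Real.exp_pos _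
    have hX1 : Real.exp (OmegaR u v * Real.log (1 - t)) ≤ 1 := by
      rw [Real.exp_le_one_iff]
      exact mul_nonpos_of_nonneg_of_nonpos (by linarith [hw.1])
        (Real.log_nonpos (by linarith [ht.1]) (by linarith [ht.1]))
    have heq : (1-t) * PhiR t u v
        = (OmegaR u v + 1 - 2*v + Real.exp (OmegaR u v * Real.log (1 - t)) * (OmegaR u v - 1 + 2*v))
          / (OmegaR u v + 1 - 2*v*(1+u)
            + Real.exp (OmegaR u v * Real.log (1 - t)) * (OmegaR u v - 1 + 2*v*(1+u))) := by
      have h1t' : (1:ℝ) - t ≠ 0 := ne_of_gt h1t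
      have hDne : OmegaR u v + 1 - 2*v*(1+u)
          + Real.exp (OmegaR u v * Real.log (1 - t)) * (OmegaR u v - 1 + 2*v*(1+u)) ≠ 0 :=
        ne_of_gt (lt_trans hm hD)
      simp only [PhiR, denPhi]
      field_simp
    rw [heq, Real.norm_eq_abs, abs_div, abs_of_pos (lt_trans hm hD)]
    apply div_le_div₀ (by norm_num) ?_ hm (le_of_lt hD)
    rw [abs_le]
    constructor
    · nlinarith [mul_nonneg hXpos.le
        (show (0:ℝ) ≤ OmegaR u v - 1 + 2*v + 1/2 by linarith [hw.1, hvv.1]), hX1]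
    · nlinarith [mul_le_mul_of_nonneg_left
        (show OmegaR u v - 1 + 2*v ≤ 5 by linarith [hw.2, hvv.2]) hXpos.le, hX1]
  have hcontJv : ∀ᵐ t ∂volume, t ∈ Set.uIoc (0:ℝ) z →
      ContinuousAt (fun v => (1-t) * PhiR t u v) 1 := by
    refine Eventually.of_forall (fun t ht => ?_)
    rw [Set.uIoc_of_le hz0] at ht
    have h1t : (0:ℝ) < 1 - t := by linarith [ht.2]
    have hd1 : denPhi t u 1 ≠ 0 := by
      rw [hden1 t ht.1.le ht.2]
      exact ne_of_gt (mul_pos (mul_pos two_pos (hta t ht.1.le ht.2)) h1t)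
    have hnum : ContinuousAt (fun v => OmegaR u v + 1 - 2*v
        + Real.exp (OmegaR u v * Real.log (1 - t)) * (OmegaR u v - 1 + 2*v)) 1 := by
      simp only [OmegaR]; fun_prop
    have hdenc : ContinuousAt (fun v => denPhi t u v) 1 := by
      simp only [denPhi, OmegaR]; fun_prop
    exact continuousAt_const.mul (ContinuousAt.div hnum hdenc hd1)
  have hJcont : ContinuousAt (fun v => ∫ t in (0:ℝ)..z, (1-t) * PhiR t u v) 1 :=
    intervalIntegral.continuousAt_of_dominated_interval hmeasJ hbound
      intervalIntegrable_const hcontJv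
  -- derivative of v ↦ PhiR z u v at 1
  have hW : HasDerivAt (fun v => OmegaR u v) (2*(1+u)) 1 := by
    have hq : HasDerivAt (fun v : ℝ => 1 - 4*(1+u)*v*(1-v)) (4*(1+u)) 1 := by
      have h := (((hasDerivAt_id (1:ℝ)).const_mul (4*(1+u))).mul
        ((hasDerivAt_id (1:ℝ)).const_sub 1)).const_sub 1
      refine h.congr_deriv ?_
      simp only [id_eq]
      ring
    have h0 : (1:ℝ) - 4*(1+u)*1*(1-1) ≠ 0 := by norm_num
    have h3 : HasDerivAt (fun v : ℝ => Real.sqrt (1 - 4*(1+u)*v*(1-v)))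
        (1/(2*Real.sqrt (1 - 4*(1+u)*1*(1-1))) * (4*(1+u))) 1 :=
      (Real.hasDerivAt_sqrt h0).comp 1 hq
    simp only [OmegaR]
    convert h3 using 1
    rw [show (1:ℝ) - 4*(1+u)*1*(1-1) = 1 by ring, Real.sqrt_one]
    ring
  have hEv := (hW.mul_const (Real.log (1-z))).exp
  have h2v : HasDerivAt (fun v : ℝ => 2*v) 2 1 := by
    simpa using (hasDerivAt_id (1:ℝ)).const_mul 2
  have h2va : HasDerivAt (fun v : ℝ => 2*v*(1+u)) (2*(1+u)) 1 := by
    simpa using ((hasDerivAt_id (1:ℝ)).const_mul 2).mul_const (1+u)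
  have hNv := ((hW.add_const 1).sub h2v).add (hEv.mul ((hW.sub_const 1).add h2v))
  have hDv := (((hW.add_const 1).sub h2va).add
    (hEv.mul ((hW.sub_const 1).add h2va))).mul_const (1-z)
  have hza : (0:ℝ) < 1 - z*(1+u) := by linarith
  have hdz1 : denPhi z u 1 ≠ 0 := by
    rw [hden1 z hz0 le_rfl]
    exact ne_of_gt (mul_pos (mul_pos two_pos hza) h1z)
  have hdz1' := hdz1
  simp only [denPhi] at hdz1'
  have hPhiV : HasDerivAt (fun v => PhiR z u v) _ 1 := hNv.div hDv hdz1'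
  -- derivative of the linear part
  have hHcont : ContinuousAt
      (fun v => 2/(1-z)^2 * (z - ∫ t in (0:ℝ)..z, (1-t) * PhiR t u v)) 1 :=
    continuousAt_const.mul (continuousAt_const.sub hJcont)
  have hlin : HasDerivAt
      (fun v => (v - 1) * (2/(1-z)^2 * (z - ∫ t in (0:ℝ)..z, (1-t) * PhiR t u v)))
      (2/(1-z)^2 * (z - ∫ t in (0:ℝ)..z, (1-t) * PhiR t u 1)) 1 := by
    rw [hasDerivAt_iff_tendsto_slope]
    apply Filter.Tendsto.congr' ?_ (hHcont.tendsto.mono_left nhdsWithin_le_nhds)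
    filter_upwards [self_mem_nhdsWithin] with v hv
    have hv1 : v - 1 ≠ 0 := sub_ne_zero.mpr (by simpa using hv)
    rw [slope_def_field]
    field_simp
    ring
  have hsum := hPhiV.add hlin
  have heq : (fun v => FR z u v) =ᶠ[𝓝 (1:ℝ)]
      (fun v => PhiR z u v
        + (v - 1) * (2/(1-z)^2 * (z - ∫ t in (0:ℝ)..z, (1-t) * PhiR t u v))) :=
    Metric.eventually_nhds_iff.mpr ⟨δ, hδpos, fun v hv => hFReq v hv⟩
  have hfinal := hsum.congr_of_eventuallyEq heq
  refine hfinal.congr_deriv ?_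
  simp only [Pi.add_apply, Pi.sub_apply, Pi.mul_apply]
  rw [hJ1, hden1 z hz0 le_rfl]
  have hE1 : Real.exp (OmegaR u 1 * Real.log (1-z)) = 1 - z := by
    rw [hw1, one_mul, Real.exp_log h1z]
  rw [hE1, hw1, one_div, one_div, Real.log_inv, Real.log_inv]
  have hY : 1 - (1+u)*z ≠ 0 := by rw [mul_comm]; exact ne_of_gt hza
  field_simp
  ring
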